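/- Let n ∈ ℕ, let Z be a nonempty compact subset of ℝ^{n+1}, μ₀ a Borel probability measure on Z, U and V nonempty compact metric spaces, λ > 0, L ≥ 0 and k > 0. Let F : ℝ^{n+1} × U × V → ℝ^{n+1} and ℓ : ℝ^{n+1} × U × V → ℝ be bounded continuous with ‖F(w,u,v) − F(w',u,v)‖ ≤ L‖w − w'‖ and |ℓ(w,u,v) − ℓ(w',u,v)| ≤ L‖w − w'‖ for all w, w', u, v. Let O ⊆ C(Z,Z) be open and let W₁, W₂ : C(Z,Z) → ℝ be bounded and continuous, with |W_i(Φ) − W_i(Ψ)| ≤ k‖Φ − Ψ‖_{L²_{μ₀}} for all Φ, Ψ ∈ C(Z,Z) and i = 1, 2. Assume that W₁ is a viscosity subsolution of −λw + 𝓗(μ₀,Φ,Dw) = 0 on O, that W₂ is a viscosity supersolution of the same equation on O, and that W₁(Φ) ≤ W₂(Φ) for every Φ ∈ C(Z,Z) ∖ O. Then W₁(Φ) ≤ W₂(Φ) for every Φ ∈ O. -/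

import Mathlib

open MeasureTheory Set

noncomputable section
set_option maxHeartbeats 1000000

abbrev Euc (n : ℕ) : Type := EuclideanSpace ℝ (Fin (n + 1))

/-- The sup norm `‖Ψ‖_∞ = sup_{z ∈ Z} ‖Ψ z‖` of a continuous map `Ψ : Z → ℝ^{n+1}`. -/
def supN {n : ℕ} {Zs : Set (Euc n)} (Ψ : C(↥Zs, Euc n)) : ℝ := ⨆ z : ↥Zs, ‖Ψ z‖

/-- The map `Φ + Ψ`, as an element of `C(Z,Z)`, given that it maps into `Z`. -/
def addIn {n : ℕ} {Zs : Set (Euc n)} (Φ : C(↥Zs, ↥Zs)) (Ψ : C(↥Zs, Euc n))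
    (h : ∀ z : ↥Zs, ((Φ z : Euc n) + Ψ z) ∈ Zs) : C(↥Zs, ↥Zs) :=
  ⟨fun z => ⟨(Φ z : Euc n) + Ψ z, h z⟩,
    Continuous.subtype_mk ((continuous_subtype_val.comp Φ.continuous).add Ψ.continuous) _⟩

/-- `p` belongs to the `δ`-superdifferential `D⁺_δ w(Φ₀)`. -/
def memSuperDiff {n : ℕ} {Zs : Set (Euc n)} (μ₀ : Measure ↥Zs) (δ : ℝ)
    (w : C(↥Zs, ↥Zs) → ℝ) (Φ₀ : C(↥Zs, ↥Zs)) (p : C(↥Zs, Euc n)) : Prop :=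
  ∀ ε : ℝ, 0 < ε → ∃ r : ℝ, 0 < r ∧
    ∀ (Ψ : C(↥Zs, Euc n)) (h : ∀ z : ↥Zs, ((Φ₀ z : Euc n) + Ψ z) ∈ Zs),
      0 < supN Ψ → supN Ψ ≤ r →
      w (addIn Φ₀ Ψ h) - w Φ₀ - ∫ z, (inner ℝ (Ψ z) (p z) : ℝ) ∂μ₀ ≤ (δ + ε) * supN Ψ

/-- `p` belongs to the `δ`-subdifferential `D⁻_δ w(Φ₀)`. -/
def memSubDiff {n : ℕ} {Zs : Set (Euc n)} (μ₀ : Measure ↥Zs) (δ : ℝ)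
    (w : C(↥Zs, ↥Zs) → ℝ) (Φ₀ : C(↥Zs, ↥Zs)) (p : C(↥Zs, Euc n)) : Prop :=
  ∀ ε : ℝ, 0 < ε → ∃ r : ℝ, 0 < r ∧
    ∀ (Ψ : C(↥Zs, Euc n)) (h : ∀ z : ↥Zs, ((Φ₀ z : Euc n) + Ψ z) ∈ Zs),
      0 < supN Ψ → supN Ψ ≤ r →
      -((δ + ε) * supN Ψ) ≤ w (addIn Φ₀ Ψ h) - w Φ₀ - ∫ z, (inner ℝ (Ψ z) (p z) : ℝ) ∂μ₀

/-- The Hamiltonian `𝓗(μ₀,Φ,p)`. -/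
def Ham {n : ℕ} {Zs : Set (Euc n)} {U V : Type} [TopologicalSpace U] [TopologicalSpace V]
    (μ₀ : Measure ↥Zs) (F : Euc n → U → V → Euc n) (l : Euc n → U → V → ℝ)
    (Φ : C(↥Zs, ↥Zs)) (p : C(↥Zs, Euc n)) : ℝ :=
  ⨅ u : U, ⨆ v : V,
    ∫ z, (l ((Φ z : Euc n)) u v + (inner ℝ (F ((Φ z : Euc n)) u v) (p z) : ℝ)) ∂μ₀

/-- `w` is a viscosity subsolution of `-λ w + 𝓗(μ₀,Φ,Dw) = 0` on `O`. -/
def IsViscositySubsolution {n : ℕ} {Zs : Set (Euc n)} {U V : Type}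
    [TopologicalSpace U] [TopologicalSpace V] (lam : ℝ) (μ₀ : Measure ↥Zs)
    (F : Euc n → U → V → Euc n) (l : Euc n → U → V → ℝ)
    (O : Set C(↥Zs, ↥Zs)) (w : C(↥Zs, ↥Zs) → ℝ) : Prop :=
  ∃ C : ℝ, 0 < C ∧ ∀ δ : ℝ, 0 < δ → ∀ Φ₀ ∈ O, ∀ p : C(↥Zs, Euc n),
    memSuperDiff μ₀ δ w Φ₀ p → -(C * δ) ≤ -(lam * w Φ₀) + Ham μ₀ F l Φ₀ p

/-- `w` is a viscosity supersolution of `-λ w + 𝓗(μ₀,Φ,Dw) = 0` on `O`. -/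
def IsViscositySupersolution {n : ℕ} {Zs : Set (Euc n)} {U V : Type}
    [TopologicalSpace U] [TopologicalSpace V] (lam : ℝ) (μ₀ : Measure ↥Zs)
    (F : Euc n → U → V → Euc n) (l : Euc n → U → V → ℝ)
    (O : Set C(↥Zs, ↥Zs)) (w : C(↥Zs, ↥Zs) → ℝ) : Prop :=
  ∃ C : ℝ, 0 < C ∧ ∀ δ : ℝ, 0 < δ → ∀ Φ₀ ∈ O, ∀ p : C(↥Zs, Euc n),
    memSubDiff μ₀ δ w Φ₀ p → -(lam * w Φ₀) + Ham μ₀ F l Φ₀ p ≤ C * δ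

/-- The `L²_{μ₀}` distance between two elements of `C(Z,Z)`. -/
def L2dist {n : ℕ} {Zs : Set (Euc n)} (μ₀ : Measure ↥Zs) (Φ Ψ : C(↥Zs, ↥Zs)) : ℝ :=
  Real.sqrt (∫ z, ‖(Φ z : Euc n) - (Ψ z : Euc n)‖ ^ 2 ∂μ₀)


/-! ### Auxiliary lemmas for the comparison principle -/

open Filter in
/-- Ekeland's variational principle (the version needed here). -/
theorem my_ekeland {X : Type*} [MetricSpace X] [CompleteSpace X] (f : X → ℝ)
    (hf : Continuous f) (M : ℝ) (hM : ∀ x, f x ≤ M) (x₀ : X) (lam : ℝ) (hlam : 0 < lam) :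
    ∃ xh : X, f x₀ ≤ f xh ∧ ∀ y, f y ≤ f xh + lam * dist y xh := by
  set S : X → Set X := fun x => {y | f x + lam * dist x y ≤ f y} with hS
  have hmemS : ∀ x, x ∈ S x := by intro x; simp [hS]
  have hSne : ∀ x, (f '' S x).Nonempty := fun x => ⟨f x, x, hmemS x, rfl⟩
  have hSbdd : ∀ x, BddAbove (f '' S x) := fun x => ⟨M, by rintro _ ⟨y, _, rfl⟩; exact hM y⟩
  have hstep : ∀ x : X, ∀ c : ℝ, 0 < c → ∃ y ∈ S x, sSup (f '' S x) - c < f y := by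
    intro x c hc
    obtain ⟨b, ⟨y, hy, rfl⟩, hb⟩ := exists_lt_of_lt_csSup (hSne x)
      (show sSup (f '' S x) - c < sSup (f '' S x) by linarith)
    exact ⟨y, hy, hb⟩
  choose nxt hnxt1 hnxt2 using fun x (n : ℕ) =>
    hstep x ((1:ℝ)/2^n) (by positivity)
  set a : ℕ → X := fun n => Nat.rec x₀ (fun n x => nxt x n) n with ha
  have ha0 : a 0 = x₀ := rfl
  have haS : ∀ n, a (n+1) ∈ S (a n) := fun n => hnxt1 (a n) n
  have hmono : ∀ n, f (a n) + lam * dist (a n) (a (n+1)) ≤ f (a (n+1)) := fun n => haS n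
  have hfmono : Monotone fun n => f (a n) := by
    apply monotone_nat_of_le_succ
    intro n
    have := hmono n
    nlinarith [dist_nonneg (x := a n) (y := a (n+1))]
  have hchain : ∀ m n, n ≤ m → f (a n) + lam * dist (a n) (a m) ≤ f (a m) := by
    intro m
    induction m with
    | zero => intro n hn; simp [Nat.le_zero.mp hn]
    | succ m ih =>
      intro n hn
      rcases Nat.lt_or_ge n (m+1) with h | h
      · have h1 := ih n (Nat.lt_succ_iff.mp h)
        have h2 := hmono m
        have := dist_triangle (a n) (a m) (a (m+1))
        nlinarith
      · have : n = m + 1 := le_antisymm hn h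
        simp [this]
  have hsum : Summable fun n => dist (a n) (a (n+1)) := by
    apply summable_of_sum_range_le (c := (M - f x₀)/lam) (fun n => dist_nonneg)
    intro m
    have key : ∀ j, lam * (∑ i ∈ Finset.range j, dist (a i) (a (i+1))) ≤ f (a j) - f (a 0) := by
      intro j
      induction j with
      | zero => simp
      | succ j ih =>
        rw [Finset.sum_range_succ]
        have := hmono j
        nlinarith
    have := key m
    have hfa : f (a m) ≤ M := hM _
    rw [ha0] at this
    rw [le_div_iff₀ hlam]
    nlinarith
  obtain ⟨xh, hxh⟩ := cauchySeq_tendsto_of_complete (cauchySeq_of_summable_dist hsum)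
  have hfl : Tendsto (fun n => f (a n)) atTop (nhds (f xh)) := (hf.tendsto xh).comp hxh
  have hfle : ∀ n, f (a n) ≤ f xh := fun n =>
    hfmono.ge_of_tendsto hfl n
  refine ⟨xh, by simpa [ha0] using hfle 0, ?_⟩
  have hxhS : ∀ n, f (a n) + lam * dist (a n) xh ≤ f xh := by
    intro n
    have hd : Tendsto (fun m => f (a n) + lam * dist (a n) (a m)) atTop
        (nhds (f (a n) + lam * dist (a n) xh)) := by
      exact tendsto_const_nhds.add (((continuous_const.dist continuous_id).tendsto xh).comp hxh
        |>.const_mul lam)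
    refine le_of_tendsto_of_tendsto hd hfl ?_
    filter_upwards [eventually_ge_atTop n] with m hm
    exact hchain m n hm
  intro y
  by_contra hcon
  push_neg at hcon
  have hyS : ∀ n, y ∈ S (a n) := by
    intro n
    have h1 := hxhS n
    have h2 := dist_triangle (a n) xh y
    have : f (a n) + lam * dist (a n) y ≤ f y := by
      have hd : dist y xh = dist xh y := dist_comm _ _
      nlinarith
    exact this
  have hfyle : ∀ n, f y ≤ f (a (n+1)) + 1/2^n := by
    intro n
    have h1 : f y ≤ sSup (f '' S (a n)) := le_csSup (hSbdd _) ⟨y, hyS n, rfl⟩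
    have h2 := hnxt2 (a n) n
    have : sSup (f '' S (a n)) - 1/2^n < f (a (n+1)) := h2
    linarith
  have hfy : f y ≤ f xh := by
    apply le_of_forall_pos_le_add
    intro ε hε
    obtain ⟨m, hm⟩ := exists_pow_lt_of_lt_one hε (show (1:ℝ)/2 < 1 by norm_num)
    have h1 := hfyle m
    have h2 := hfle (m+1)
    have h3 : (1:ℝ)/2^m = (1/2)^m := by rw [div_pow, one_pow]
    linarith [h3 ▸ hm]
  nlinarith [dist_nonneg (x := y) (y := xh)]

lemma cont_integrable {X : Type*} [MeasurableSpace X] [TopologicalSpace X]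
    [OpensMeasurableSpace X] [CompactSpace X] (μ : Measure X) [IsFiniteMeasure μ]
    {g : X → ℝ} (hg : Continuous g) : Integrable g μ :=
  hg.integrable_of_hasCompactSupport
    (IsCompact.of_isClosed_subset isCompact_univ (isClosed_tsupport g) (subset_univ _))

lemma sq_int {X : Type*} [MeasurableSpace X] (μ : Measure X) [IsProbabilityMeasure μ]
    {g : X → ℝ} (h1 : Integrable g μ) (h2 : Integrable (fun x => g x ^ 2) μ) :
    (∫ x, g x ∂μ) ^ 2 ≤ ∫ x, g x ^ 2 ∂μ := by
  set c := ∫ x, g x ∂μ with hc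
  have h0 : 0 ≤ ∫ x, (g x - c) ^ 2 ∂μ := integral_nonneg fun x => sq_nonneg _
  have hexp : ∫ x, (g x - c) ^ 2 ∂μ = (∫ x, g x ^ 2 ∂μ) - 2 * c * c + c ^ 2 := by
    have heq : ∀ x, (g x - c) ^ 2 = g x ^ 2 - (2 * c) * g x + c ^ 2 := fun x => by ring
    rw [integral_congr_ae (Filter.Eventually.of_forall heq)]
    have hA : Integrable (fun a => g a ^ 2 - 2 * c * g a) μ := h2.sub (h1.const_mul _)
    have hB : Integrable (fun a : X => (2 * c) * g a) μ := h1.const_mul _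
    rw [integral_add hA (integrable_const _), integral_sub h2 hB,
      MeasureTheory.integral_const_mul, integral_const]
    simp [← hc]
  nlinarith

lemma infsup_le {U V : Type*} [Nonempty U] [Nonempty V] (I₁ I₂ : U → V → ℝ) (C₀ B : ℝ)
    (hB1 : ∀ u v, |I₁ u v| ≤ C₀) (hB2 : ∀ u v, |I₂ u v| ≤ C₀)
    (hI : ∀ u v, I₁ u v ≤ I₂ u v + B) :
    (⨅ u, ⨆ v, I₁ u v) ≤ (⨅ u, ⨆ v, I₂ u v) + B := by
  have bdd1 : ∀ u, BddAbove (range (I₁ u)) := fun u =>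
    ⟨C₀, by rintro _ ⟨v, rfl⟩; exact (abs_le.mp (hB1 u v)).2⟩
  have bdd2 : ∀ u, BddAbove (range (I₂ u)) := fun u =>
    ⟨C₀, by rintro _ ⟨v, rfl⟩; exact (abs_le.mp (hB2 u v)).2⟩
  have step : ∀ u, (⨆ v, I₁ u v) ≤ (⨆ v, I₂ u v) + B := fun u =>
    ciSup_le fun v => (hI u v).trans (add_le_add_left (le_ciSup (bdd2 u) v) B)
  have bddb1 : BddBelow (range fun u => ⨆ v, I₁ u v) := by
    refine ⟨-C₀, ?_⟩
    rintro _ ⟨u, rfl⟩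
    exact le_trans (abs_le.mp (hB1 u (Classical.arbitrary V))).1
      (le_ciSup (bdd1 u) (Classical.arbitrary V))
  have key : (⨅ u, ⨆ v, I₁ u v) - B ≤ ⨅ u, ⨆ v, I₂ u v := by
    apply le_ciInf
    intro u
    have h1 := ciInf_le bddb1 u
    linarith [step u]
  linarith

section Aux
variable {n : ℕ} {Zs : Set (Euc n)}

lemma supN_bddAbove [CompactSpace ↥Zs] (Ψ : C(↥Zs, Euc n)) :
    BddAbove (range fun z => ‖Ψ z‖) := (isCompact_range Ψ.continuous.norm).bddAbove

lemma norm_le_supN [CompactSpace ↥Zs] (Ψ : C(↥Zs, Euc n)) (z : ↥Zs) :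
    ‖Ψ z‖ ≤ supN Ψ := le_ciSup (supN_bddAbove Ψ) z

lemma supN_nonneg [CompactSpace ↥Zs] [Nonempty ↥Zs] (Ψ : C(↥Zs, Euc n)) : 0 ≤ supN Ψ :=
  le_trans (norm_nonneg _) (norm_le_supN Ψ (Classical.arbitrary _))

lemma addIn_coe (Φ : C(↥Zs, ↥Zs)) (Ψ : C(↥Zs, Euc n)) (h) (z : ↥Zs) :
    ((addIn Φ Ψ h z : ↥Zs) : Euc n) = (Φ z : Euc n) + Ψ z := rfl

lemma dist_addIn [CompactSpace ↥Zs] [Nonempty ↥Zs] (Φ : C(↥Zs, ↥Zs)) (Ψ : C(↥Zs, Euc n)) (h) :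
    dist (addIn Φ Ψ h) Φ = supN Ψ := by
  apply le_antisymm
  · rw [ContinuousMap.dist_le_iff_of_nonempty]
    intro z
    rw [Subtype.dist_eq, dist_eq_norm, addIn_coe, add_sub_cancel_left]
    exact norm_le_supN Ψ z
  · apply ciSup_le
    intro z
    have h2 := ContinuousMap.dist_apply_le_dist (f := addIn Φ Ψ h) (g := Φ) z
    rw [Subtype.dist_eq, dist_eq_norm, addIn_coe, add_sub_cancel_left] at h2
    exact h2

lemma int_norm_add_sq [CompactSpace ↥Zs] (μ : Measure ↥Zs) [IsProbabilityMeasure μ]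
    (A B : C(↥Zs, Euc n)) :
    ∫ z, ‖A z + B z‖ ^ 2 ∂μ = (∫ z, ‖A z‖ ^ 2 ∂μ) +
      2 * ∫ z, (inner ℝ (A z) (B z) : ℝ) ∂μ + ∫ z, ‖B z‖ ^ 2 ∂μ := by
  have hA2 : Integrable (fun z => ‖A z‖ ^ 2) μ :=
    cont_integrable μ (A.continuous.norm.pow 2)
  have hB2 : Integrable (fun z => ‖B z‖ ^ 2) μ :=
    cont_integrable μ (B.continuous.norm.pow 2)
  have hAB : Integrable (fun z => (2 : ℝ) * (inner ℝ (A z) (B z) : ℝ)) μ :=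
    cont_integrable μ (continuous_const.mul (A.continuous.inner B.continuous))
  have heq : ∀ z, ‖A z + B z‖ ^ 2
      = (‖A z‖ ^ 2 + 2 * (inner ℝ (A z) (B z) : ℝ)) + ‖B z‖ ^ 2 := fun z => by
    rw [norm_add_sq_real]
  have hsum : Integrable (fun z => ‖A z‖ ^ 2 + 2 * (inner ℝ (A z) (B z) : ℝ)) μ := hA2.add hAB
  rw [integral_congr_ae (Filter.Eventually.of_forall heq),
    integral_add hsum hB2, integral_add hA2 hAB, MeasureTheory.integral_const_mul]

lemma int_norm_sub_sq [CompactSpace ↥Zs] (μ : Measure ↥Zs) [IsProbabilityMeasure μ]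
    (A B : C(↥Zs, Euc n)) :
    ∫ z, ‖A z - B z‖ ^ 2 ∂μ = (∫ z, ‖A z‖ ^ 2 ∂μ) -
      2 * ∫ z, (inner ℝ (A z) (B z) : ℝ) ∂μ + ∫ z, ‖B z‖ ^ 2 ∂μ := by
  have hA2 : Integrable (fun z => ‖A z‖ ^ 2) μ :=
    cont_integrable μ (A.continuous.norm.pow 2)
  have hB2 : Integrable (fun z => ‖B z‖ ^ 2) μ :=
    cont_integrable μ (B.continuous.norm.pow 2)
  have hAB : Integrable (fun z => (2 : ℝ) * (inner ℝ (A z) (B z) : ℝ)) μ :=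
    cont_integrable μ (continuous_const.mul (A.continuous.inner B.continuous))
  have heq : ∀ z, ‖A z - B z‖ ^ 2
      = (‖A z‖ ^ 2 - 2 * (inner ℝ (A z) (B z) : ℝ)) + ‖B z‖ ^ 2 := fun z => by
    rw [norm_sub_sq_real]
  have hsum : Integrable (fun z => ‖A z‖ ^ 2 - 2 * (inner ℝ (A z) (B z) : ℝ)) μ := hA2.sub hAB
  rw [integral_congr_ae (Filter.Eventually.of_forall heq),
    integral_add hsum hB2, integral_sub hA2 hAB, MeasureTheory.integral_const_mul]

lemma int_sq_le_supN [CompactSpace ↥Zs] [Nonempty ↥Zs] (μ : Measure ↥Zs)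
    [IsProbabilityMeasure μ] (Ψ : C(↥Zs, Euc n)) :
    ∫ z, ‖Ψ z‖ ^ 2 ∂μ ≤ supN Ψ ^ 2 := by
  have h1 : ∫ z, ‖Ψ z‖ ^ 2 ∂μ ≤ ∫ _, supN Ψ ^ 2 ∂μ := by
    apply integral_mono (cont_integrable μ (Ψ.continuous.norm.pow 2)) (integrable_const _)
    intro z
    exact pow_le_pow_left₀ (norm_nonneg _) (norm_le_supN Ψ z) 2
  rwa [integral_const, probReal_univ, one_smul] at h1

lemma pen_continuous [CompactSpace ↥Zs] [Nonempty ↥Zs] (μ : Measure ↥Zs)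
    [IsProbabilityMeasure μ] (R : ℝ) (hR : ∀ x : ↥Zs, ‖(x : Euc n)‖ ≤ R) :
    Continuous (fun q : C(↥Zs, ↥Zs) × C(↥Zs, ↥Zs) =>
      ∫ z, ‖(q.1 z : Euc n) - (q.2 z : Euc n)‖ ^ 2 ∂μ) := by
  have hR0 : 0 ≤ R := le_trans (norm_nonneg _) (hR (Classical.arbitrary _))
  set Pen : C(↥Zs, ↥Zs) × C(↥Zs, ↥Zs) → ℝ :=
    fun q => ∫ z, ‖(q.1 z : Euc n) - (q.2 z : Euc n)‖ ^ 2 ∂μ with hPen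
  have hint : ∀ q : C(↥Zs, ↥Zs) × C(↥Zs, ↥Zs),
      Integrable (fun z => ‖(q.1 z : Euc n) - (q.2 z : Euc n)‖ ^ 2) μ := fun q =>
    cont_integrable μ (((continuous_subtype_val.comp q.1.continuous).sub
      (continuous_subtype_val.comp q.2.continuous)).norm.pow 2)
  have key : ∀ a b, |Pen a - Pen b| ≤ (8 * R + 8) * dist a b := by
    intro a b
    have hd0 : (0:ℝ) ≤ dist a b := dist_nonneg
    rw [hPen, ← integral_sub (hint a) (hint b)]
    have hb : ∀ᵐ z ∂μ, ‖‖(a.1 z : Euc n) - (a.2 z : Euc n)‖ ^ 2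
        - ‖(b.1 z : Euc n) - (b.2 z : Euc n)‖ ^ 2‖ ≤ (8 * R + 8) * dist a b := by
      apply Filter.Eventually.of_forall
      intro z
      set x := ‖(a.1 z : Euc n) - (a.2 z : Euc n)‖
      set y := ‖(b.1 z : Euc n) - (b.2 z : Euc n)‖
      have hx : x ≤ 2 * R := by
        refine le_trans (norm_sub_le _ _) ?_
        have := hR (a.1 z); have := hR (a.2 z); linarith
      have hy : y ≤ 2 * R := by
        refine le_trans (norm_sub_le _ _) ?_
        have := hR (b.1 z); have := hR (b.2 z); linarith
      have hx0 : 0 ≤ x := norm_nonneg _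
      have hy0 : 0 ≤ y := norm_nonneg _
      have hxy : |x - y| ≤ 2 * dist a b := by
        have h1 : |x - y| ≤ ‖((a.1 z : Euc n) - (a.2 z : Euc n))
            - ((b.1 z : Euc n) - (b.2 z : Euc n))‖ := abs_norm_sub_norm_le _ _
        have h2 : ‖((a.1 z : Euc n) - (a.2 z : Euc n)) - ((b.1 z : Euc n) - (b.2 z : Euc n))‖
            ≤ ‖(a.1 z : Euc n) - (b.1 z : Euc n)‖ + ‖(a.2 z : Euc n) - (b.2 z : Euc n)‖ := by
          have heq : ((a.1 z : Euc n) - (a.2 z : Euc n)) - ((b.1 z : Euc n) - (b.2 z : Euc n))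
              = ((a.1 z : Euc n) - (b.1 z : Euc n)) - ((a.2 z : Euc n) - (b.2 z : Euc n)) := by
            abel
          rw [heq]
          exact norm_sub_le _ _
        have h3 : ‖(a.1 z : Euc n) - (b.1 z : Euc n)‖ ≤ dist a b := by
          rw [← dist_eq_norm, ← Subtype.dist_eq]
          refine le_trans (ContinuousMap.dist_apply_le_dist z) ?_
          rw [Prod.dist_eq]
          exact le_max_left _ _
        have h4 : ‖(a.2 z : Euc n) - (b.2 z : Euc n)‖ ≤ dist a b := by
          rw [← dist_eq_norm, ← Subtype.dist_eq]
          refine le_trans (ContinuousMap.dist_apply_le_dist z) ?_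
          rw [Prod.dist_eq]
          exact le_max_right _ _
        calc |x - y| ≤ _ := h1
        _ ≤ _ := h2
        _ ≤ 2 * dist a b := by linarith
      have habs : |x ^ 2 - y ^ 2| ≤ 4 * R * |x - y| := by
        rw [show x ^ 2 - y ^ 2 = (x + y) * (x - y) by ring, abs_mul]
        apply mul_le_mul_of_nonneg_right _ (abs_nonneg _)
        rw [abs_of_nonneg (by linarith)]
        linarith
      rw [Real.norm_eq_abs]
      nlinarith [abs_nonneg (x - y)]
    have hni := norm_integral_le_of_norm_le_const hb
    rwa [probReal_univ, mul_one, Real.norm_eq_abs] at hni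
  have hlip : LipschitzWith (8 * R + 8).toNNReal Pen := by
    apply LipschitzWith.of_dist_le_mul
    intro a b
    rw [Real.dist_eq, Real.coe_toNNReal _ (by linarith)]
    exact key a b
  exact hlip.continuous

end Aux

/-- Comparison principle for the Hamilton–Jacobi–Isaacs equation: a bounded continuous
`L²`-Lipschitz viscosity subsolution lying below a supersolution outside `O` lies below
it on `O` as well. -/
theorem comparison_principle
    (n : ℕ) (Zs : Set (Euc n)) (hZc : IsCompact Zs) (hZn : Zs.Nonempty)
    (μ₀ : Measure ↥Zs) [IsProbabilityMeasure μ₀]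
    (U V : Type) [MetricSpace U] [CompactSpace U] [Nonempty U]
    [MetricSpace V] [CompactSpace V] [Nonempty V]
    (lam L k : ℝ) (hlam : 0 < lam) (hL : 0 ≤ L) (hk : 0 < k)
    (F : Euc n → U → V → Euc n) (l : Euc n → U → V → ℝ)
    (hFc : Continuous fun q : Euc n × U × V => F q.1 q.2.1 q.2.2)
    (hlc : Continuous fun q : Euc n × U × V => l q.1 q.2.1 q.2.2)
    (hFb : ∃ M : ℝ, ∀ w a b, ‖F w a b‖ ≤ M)
    (hlb : ∃ M : ℝ, ∀ w a b, |l w a b| ≤ M)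
    (hFL : ∀ w w' a b, ‖F w a b - F w' a b‖ ≤ L * ‖w - w'‖)
    (hlL : ∀ w w' a b, |l w a b - l w' a b| ≤ L * ‖w - w'‖)
    (O : Set C(↥Zs, ↥Zs)) (hO : IsOpen O)
    (W₁ W₂ : C(↥Zs, ↥Zs) → ℝ)
    (hW₁c : Continuous W₁) (hW₂c : Continuous W₂)
    (hW₁b : ∃ M : ℝ, ∀ Φ, |W₁ Φ| ≤ M) (hW₂b : ∃ M : ℝ, ∀ Φ, |W₂ Φ| ≤ M)
    (hW₁L : ∀ Φ Ψ : C(↥Zs, ↥Zs), |W₁ Φ - W₁ Ψ| ≤ k * L2dist μ₀ Φ Ψ)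
    (hW₂L : ∀ Φ Ψ : C(↥Zs, ↥Zs), |W₂ Φ - W₂ Ψ| ≤ k * L2dist μ₀ Φ Ψ)
    (hsub : IsViscositySubsolution lam μ₀ F l O W₁)
    (hsup : IsViscositySupersolution lam μ₀ F l O W₂)
    (hbd : ∀ Φ : C(↥Zs, ↥Zs), Φ ∉ O → W₁ Φ ≤ W₂ Φ) :
    ∀ Φ ∈ O, W₁ Φ ≤ W₂ Φ := by
  haveI : CompactSpace ↥Zs := isCompact_iff_compactSpace.mp hZc
  haveI : Nonempty ↥Zs := hZn.to_subtype
  haveI : CompleteSpace ↥Zs := hZc.isClosed.completeSpace_coe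
  obtain ⟨C₁, hC₁, hsub⟩ := hsub
  obtain ⟨C₂, hC₂, hsup⟩ := hsup
  obtain ⟨M₁, hM₁⟩ := hW₁b
  obtain ⟨M₂, hM₂⟩ := hW₂b
  obtain ⟨R₀, hR₀⟩ := hZc.isBounded.exists_norm_le
  have hRz : ∀ x : ↥Zs, ‖(x : Euc n)‖ ≤ R₀ := fun x => hR₀ x x.2
  have hR0 : 0 ≤ R₀ := le_trans (norm_nonneg _) (hRz (Classical.arbitrary _))
  obtain ⟨Ml, hMl⟩ := hlb
  have hMl0 : 0 ≤ Ml := le_trans (abs_nonneg _)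
    (hMl 0 (Classical.arbitrary U) (Classical.arbitrary V))
  obtain ⟨MF, hMF⟩ := hFb
  have hMF0 : 0 ≤ MF := le_trans (norm_nonneg _)
    (hMF 0 (Classical.arbitrary U) (Classical.arbitrary V))
  intro Φst hΦst
  by_contra hcon
  push_neg at hcon
  -- the supremum of W₁ - W₂
  have hbddM : BddAbove (range fun Φ => W₁ Φ - W₂ Φ) := by
    refine ⟨M₁ + M₂, ?_⟩
    rintro _ ⟨Φ, rfl⟩
    have ha := abs_le.mp (hM₁ Φ)
    have hb := abs_le.mp (hM₂ Φ)
    simp only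
    linarith only [ha.1, ha.2, hb.1, hb.2]
  set M := sSup (range fun Φ => W₁ Φ - W₂ Φ) with hMdef
  have hMge : W₁ Φst - W₂ Φst ≤ M := le_csSup hbddM ⟨Φst, rfl⟩
  have hM0 : 0 < M := lt_of_lt_of_le (by linarith only [hcon]) hMge
  -- the small parameter ε
  set K := lam + L * (k + 2) + 2 * L * k * (k + 2) + 2 * L + C₁ + C₂ with hKdef
  have hK0 : 0 < K := by
    have h1 : (0:ℝ) ≤ L * (k + 2) := mul_nonneg hL (by linarith)
    have h2 : (0:ℝ) ≤ 2 * L * k * (k + 2) :=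
      mul_nonneg (mul_nonneg (mul_nonneg (by norm_num) hL) hk.le) (by linarith)
    have h3 : (0:ℝ) ≤ 2 * L := by linarith
    rw [hKdef]
    linarith
  set ε := min 1 (min (lam * M / (2 * K)) (M / (2 * (1 + k * (k + 2) + 2 * k * (k + 2))))) with hεdef
  have hε0 : 0 < ε := by
    apply lt_min one_pos
    apply lt_min
    · positivity
    · positivity
  have hε1 : ε ≤ 1 := min_le_left _ _
  have hεa : ε ≤ lam * M / (2 * K) := le_trans (min_le_right _ _) (min_le_left _ _)
  have hεb : ε ≤ M / (2 * (1 + k * (k + 2) + 2 * k * (k + 2))) :=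
    le_trans (min_le_right _ _) (min_le_right _ _)
  have hden : (0:ℝ) < 2 * (1 + k * (k + 2) + 2 * k * (k + 2)) := by
    have h1 : (0:ℝ) ≤ k * (k + 2) := mul_nonneg hk.le (by linarith only [hk])
    linarith only [h1]
  have hεb' : ε * (2 * (1 + k * (k + 2) + 2 * k * (k + 2))) ≤ M := by
    rw [← le_div_iff₀ hden]
    exact hεb
  -- near-maximizer of W₁ - W₂
  obtain ⟨Φ₀, hΦ₀⟩ : ∃ Φ₀, M - ε ^ 2 < W₁ Φ₀ - W₂ Φ₀ := by
    obtain ⟨b, ⟨Φ₀, rfl⟩, hb⟩ := exists_lt_of_lt_csSup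
      (⟨W₁ Φst - W₂ Φst, ⟨Φst, rfl⟩⟩ : (range fun Φ => W₁ Φ - W₂ Φ).Nonempty)
      (show M - ε ^ 2 < M by
        have : 0 < ε ^ 2 := by positivity
        linarith only [this])
    exact ⟨Φ₀, hb⟩
  -- the penalized functional and Ekeland
  set Pen : C(↥Zs, ↥Zs) × C(↥Zs, ↥Zs) → ℝ :=
    fun q => ∫ z, ‖(q.1 z : Euc n) - (q.2 z : Euc n)‖ ^ 2 ∂μ₀ with hPenDef
  have hPenc : Continuous Pen := pen_continuous μ₀ R₀ hRz
  have hPen0 : ∀ q, 0 ≤ Pen q := fun q => integral_nonneg fun z => sq_nonneg _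
  set f : C(↥Zs, ↥Zs) × C(↥Zs, ↥Zs) → ℝ :=
    fun q => W₁ q.1 - W₂ q.2 - (1 / ε) * Pen q with hfDef
  have hfeq : ∀ q : C(↥Zs, ↥Zs) × C(↥Zs, ↥Zs),
      f q = W₁ q.1 - W₂ q.2 - (1 / ε) * Pen q := fun q => rfl
  have hfc : Continuous f :=
    ((hW₁c.comp continuous_fst).sub (hW₂c.comp continuous_snd)).sub
      (continuous_const.mul hPenc)
  have hfbd : ∀ q, f q ≤ M₁ + M₂ := by
    intro q
    have h1 := abs_le.mp (hM₁ q.1)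
    have h2 := abs_le.mp (hM₂ q.2)
    have h3 := hPen0 q
    have h4 : 0 < 1 / ε := by positivity
    have h5 : 0 ≤ (1 / ε) * Pen q := mul_nonneg h4.le h3
    rw [hfeq]
    linarith only [h1.1, h1.2, h2.1, h2.2, h5]
  obtain ⟨xh, hxh1, hxh2⟩ := my_ekeland f hfc (M₁ + M₂) hfbd (Φ₀, Φ₀) ε hε0
  set Φh := xh.1 with hΦh
  set Φh' := xh.2 with hΦh'
  have hxheq : xh = (Φh, Φh') := rfl
  have hPen00 : Pen (Φ₀, Φ₀) = 0 := by
    rw [hPenDef]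
    simp
  have hf₀ : M - ε ^ 2 < f (Φ₀, Φ₀) := by
    rw [hfeq, hPen00]
    simp only [mul_zero, sub_zero]
    exact hΦ₀
  set P2 := Pen xh with hP2def
  set D := L2dist μ₀ Φh Φh' with hDdef
  have hDsq : D = Real.sqrt P2 := rfl
  have hD2 : D ^ 2 = P2 := by rw [hDsq]; exact Real.sq_sqrt (hPen0 xh)
  have hD0 : 0 ≤ D := Real.sqrt_nonneg _
  have hval : M - ε ^ 2 < W₁ Φh - W₂ Φh' - (1 / ε) * P2 := by
    have := lt_of_lt_of_le hf₀ hxh1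
    rwa [hfeq] at this
  have hW2lip := abs_le.mp (hW₂L Φh Φh')
  have hW1lip := abs_le.mp (hW₁L Φh Φh')
  have hMub : W₁ Φh - W₂ Φh ≤ M := le_csSup hbddM ⟨Φh, rfl⟩
  have hP20 : 0 ≤ P2 := hPen0 xh
  have hεsq : ε ^ 2 ≤ ε := by
    have h := mul_le_mul_of_nonneg_left hε1 hε0.le
    calc ε ^ 2 = ε * ε := pow_two ε
    _ ≤ ε * 1 := h
    _ = ε := mul_one ε
  have hkey : (1 / ε) * P2 ≤ k * D + ε ^ 2 := by
    have h1 : W₁ Φh - W₂ Φh' ≤ M + k * D := by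
      have h2 := hW2lip.2
      rw [← hDdef] at h2
      linarith only [h2, hMub]
    linarith only [h1, hval]
  have hP2D : P2 ≤ ε * k * D + ε ^ 3 := by
    have h1 : ε * ((1 / ε) * P2) = P2 := by field_simp
    have h2 := mul_le_mul_of_nonneg_left hkey hε0.le
    rw [h1] at h2
    have h3 : ε * (k * D + ε ^ 2) = ε * k * D + ε ^ 3 := by ring
    linarith only [h2, h3]
  have hDle : D ≤ (k + 2) * ε := by
    by_contra hno
    push_neg at hno
    have hDpos : 0 < D := lt_trans (by positivity) hno
    have h2 : ((k + 2) * ε) * D < D * D := mul_lt_mul_of_pos_right hno hDpos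
    have h3 : 2 * ε * ((k + 2) * ε) ≤ 2 * ε * D :=
      mul_le_mul_of_nonneg_left hno.le (by positivity)
    have h4 : ε ^ 3 ≤ ε ^ 2 := by
      have h := mul_le_mul_of_nonneg_left hε1 (sq_nonneg ε)
      calc ε ^ 3 = ε ^ 2 * ε := by ring
      _ ≤ ε ^ 2 * 1 := h
      _ = ε ^ 2 := mul_one _
    have h6 : 0 < ε ^ 2 := by positivity
    have h7 : 0 ≤ k * ε ^ 2 := mul_nonneg hk.le (sq_nonneg ε)
    have hsqid : D * D = D ^ 2 := (pow_two D).symm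
    linarith only [h2, h3, h4, h6, h7, hP2D, hD2, hsqid]
  -- both points lie in O
  have hO1 : M - ε ^ 2 ≤ W₁ Φh - W₂ Φh' := by
    have hp : (0:ℝ) ≤ (1 / ε) * P2 := mul_nonneg (by positivity) hP20
    linarith only [hval, hp]
  have hkD : k * D ≤ k * ((k + 2) * ε) := mul_le_mul_of_nonneg_left hDle hk.le
  have hΦhO : Φh ∈ O := by
    by_contra hno
    have hb := hbd Φh hno
    have h2 := hW2lip.2
    rw [← hDdef] at h2
    have hp1 : (0:ℝ) ≤ k * ε := mul_nonneg hk.le hε0.le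
    have hp2 : (0:ℝ) ≤ k * k * ε := mul_nonneg (mul_nonneg hk.le hk.le) hε0.le
    clear_value M K ε D P2
    linarith only [hb, hO1, h2, hεb', hkD, hεsq, hk.le, hp1, hp2, hε0]
  have hΦh'O : Φh' ∈ O := by
    by_contra hno
    have hb := hbd Φh' hno
    have h1 := hW1lip.2
    rw [← hDdef] at h1
    have hp1 : (0:ℝ) ≤ k * ε := mul_nonneg hk.le hε0.le
    have hp2 : (0:ℝ) ≤ k * k * ε := mul_nonneg (mul_nonneg hk.le hk.le) hε0.le
    clear_value M K ε D P2
    linarith only [hb, hO1, h1, hεb', hkD, hεsq, hk.le, hp1, hp2, hε0]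
  -- the candidate gradient p
  set Δc : C(↥Zs, Euc n) :=
    ⟨fun z => (Φh z : Euc n) - (Φh' z : Euc n),
      (continuous_subtype_val.comp Φh.continuous).sub
        (continuous_subtype_val.comp Φh'.continuous)⟩ with hΔcDef
  have hΔcapp : ∀ z, Δc z = (Φh z : Euc n) - (Φh' z : Euc n) := fun z => rfl
  set p : C(↥Zs, Euc n) := ⟨fun z => (2 / ε) • Δc z, by exact Δc.continuous.const_smul (2 / ε)⟩ with hpDef
  have hpapp : ∀ z, p z = (2 / ε) • Δc z := fun z => rfl
  have hP2Δ : P2 = ∫ z, ‖Δc z‖ ^ 2 ∂μ₀ := rfl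
  -- inner product rewriting
  have hip : ∀ Ψ : C(↥Zs, Euc n), ∫ z, (inner ℝ (Ψ z) (p z) : ℝ) ∂μ₀
      = (2 / ε) * ∫ z, (inner ℝ (Δc z) (Ψ z) : ℝ) ∂μ₀ := by
    intro Ψ
    rw [← MeasureTheory.integral_const_mul]
    congr 1
    funext z
    rw [hpapp, real_inner_smul_right, real_inner_comm]
  have hΨsq : ∀ Ψ : C(↥Zs, Euc n), ∫ z, ‖Ψ z‖ ^ 2 ∂μ₀ ≤ supN Ψ ^ 2 :=
    fun Ψ => int_sq_le_supN μ₀ Ψ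
  -- p is in the ε-superdifferential of W₁ at Φh
  have hmem1 : memSuperDiff μ₀ ε W₁ Φh p := by
    intro ε' hε'
    refine ⟨ε * ε', by positivity, ?_⟩
    intro Ψ h hΨpos hΨle
    have hek := hxh2 (addIn Φh Ψ h, Φh')
    rw [hxheq] at hek
    have hdist : dist ((addIn Φh Ψ h, Φh') : C(↥Zs, ↥Zs) × C(↥Zs, ↥Zs)) (Φh, Φh')
        = supN Ψ := by
      rw [Prod.dist_eq, dist_self, dist_addIn]
      exact max_eq_left (supN_nonneg Ψ)
    have hPenEx : Pen (addIn Φh Ψ h, Φh') = P2 +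
        2 * ∫ z, (inner ℝ (Δc z) (Ψ z) : ℝ) ∂μ₀ + ∫ z, ‖Ψ z‖ ^ 2 ∂μ₀ := by
      have heq : ∀ z : ↥Zs, ‖(addIn Φh Ψ h z : Euc n) - (Φh' z : Euc n)‖ ^ 2
          = ‖Δc z + Ψ z‖ ^ 2 := by
        intro z
        rw [addIn_coe, hΔcapp, add_sub_right_comm]
      rw [hPenDef]
      simp only
      rw [integral_congr_ae (Filter.Eventually.of_forall heq), int_norm_add_sq μ₀ Δc Ψ, hP2Δ]
    rw [hfeq, hfeq, hdist, hPenEx] at hek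
    simp only at hek
    rw [hip]
    have hS := hΨsq Ψ
    have hq : (1 / ε) * (supN Ψ ^ 2) ≤ ε' * supN Ψ := by
      have h1 : supN Ψ ^ 2 ≤ (ε * ε') * supN Ψ := by
        have h := mul_le_mul_of_nonneg_right hΨle hΨpos.le
        calc supN Ψ ^ 2 = supN Ψ * supN Ψ := pow_two _
        _ ≤ (ε * ε') * supN Ψ := h
      calc (1 / ε) * (supN Ψ ^ 2) ≤ (1 / ε) * ((ε * ε') * supN Ψ) :=
            mul_le_mul_of_nonneg_left h1 (by positivity)
      _ = ε' * supN Ψ := by field_simp <;> ring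
    have hS' : (1 / ε) * (∫ z, ‖Ψ z‖ ^ 2 ∂μ₀) ≤ (1 / ε) * (supN Ψ ^ 2) :=
      mul_le_mul_of_nonneg_left hS (by positivity)
    have hexp : (1 / ε) * (P2 + 2 * (∫ z, (inner ℝ (Δc z) (Ψ z) : ℝ) ∂μ₀)
          + ∫ z, ‖Ψ z‖ ^ 2 ∂μ₀)
        = (1 / ε) * P2 + (2 / ε) * (∫ z, (inner ℝ (Δc z) (Ψ z) : ℝ) ∂μ₀)
          + (1 / ε) * (∫ z, ‖Ψ z‖ ^ 2 ∂μ₀) := by ring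
    rw [hexp] at hek
    linarith only [hek, hS', hq]
  -- p is in the ε-subdifferential of W₂ at Φh'
  have hmem2 : memSubDiff μ₀ ε W₂ Φh' p := by
    intro ε' hε'
    refine ⟨ε * ε', by positivity, ?_⟩
    intro Ψ h hΨpos hΨle
    have hek := hxh2 (Φh, addIn Φh' Ψ h)
    rw [hxheq] at hek
    have hdist : dist ((Φh, addIn Φh' Ψ h) : C(↥Zs, ↥Zs) × C(↥Zs, ↥Zs)) (Φh, Φh')
        = supN Ψ := by
      rw [Prod.dist_eq, dist_self, dist_addIn]
      exact max_eq_right (supN_nonneg Ψ)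
    have hPenEx : Pen (Φh, addIn Φh' Ψ h) = P2 -
        2 * ∫ z, (inner ℝ (Δc z) (Ψ z) : ℝ) ∂μ₀ + ∫ z, ‖Ψ z‖ ^ 2 ∂μ₀ := by
      have heq : ∀ z : ↥Zs, ‖(Φh z : Euc n) - (addIn Φh' Ψ h z : Euc n)‖ ^ 2
          = ‖Δc z - Ψ z‖ ^ 2 := by
        intro z
        rw [addIn_coe, hΔcapp, sub_add_eq_sub_sub]
      rw [hPenDef]
      simp only
      rw [integral_congr_ae (Filter.Eventually.of_forall heq), int_norm_sub_sq μ₀ Δc Ψ, hP2Δ]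
    rw [hfeq, hfeq, hdist, hPenEx] at hek
    simp only at hek
    rw [hip]
    have hS := hΨsq Ψ
    have hq : (1 / ε) * (supN Ψ ^ 2) ≤ ε' * supN Ψ := by
      have h1 : supN Ψ ^ 2 ≤ (ε * ε') * supN Ψ := by
        have h := mul_le_mul_of_nonneg_right hΨle hΨpos.le
        calc supN Ψ ^ 2 = supN Ψ * supN Ψ := pow_two _
        _ ≤ (ε * ε') * supN Ψ := h
      calc (1 / ε) * (supN Ψ ^ 2) ≤ (1 / ε) * ((ε * ε') * supN Ψ) :=
            mul_le_mul_of_nonneg_left h1 (by positivity)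
      _ = ε' * supN Ψ := by field_simp <;> ring
    have hS' : (1 / ε) * (∫ z, ‖Ψ z‖ ^ 2 ∂μ₀) ≤ (1 / ε) * (supN Ψ ^ 2) :=
      mul_le_mul_of_nonneg_left hS (by positivity)
    have hexp : (1 / ε) * (P2 - 2 * (∫ z, (inner ℝ (Δc z) (Ψ z) : ℝ) ∂μ₀)
          + ∫ z, ‖Ψ z‖ ^ 2 ∂μ₀)
        = (1 / ε) * P2 - (2 / ε) * (∫ z, (inner ℝ (Δc z) (Ψ z) : ℝ) ∂μ₀)
          + (1 / ε) * (∫ z, ‖Ψ z‖ ^ 2 ∂μ₀) := by ring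
    rw [hexp] at hek
    linarith only [hek, hS', hq]
  -- apply the sub/supersolution properties
  have hvs1 := hsub ε hε0 Φh hΦhO p hmem1
  have hvs2 := hsup ε hε0 Φh' hΦh'O p hmem2
  -- comparing the Hamiltonians
  have hpnorm : ∀ z, ‖p z‖ = (2 / ε) * ‖Δc z‖ := by
    intro z
    rw [hpapp, norm_smul, Real.norm_eq_abs, abs_of_pos (by positivity)]
  have hΔbd : ∀ z, ‖Δc z‖ ≤ 2 * R₀ := by
    intro z
    rw [hΔcapp]
    refine le_trans (norm_sub_le _ _) ?_
    have := hRz (Φh z); have := hRz (Φh' z); linarith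
  set Pn := (2 / ε) * (2 * R₀) with hPnDef
  have hPn : ∀ z, ‖p z‖ ≤ Pn := by
    intro z
    rw [hpnorm]
    exact mul_le_mul_of_nonneg_left (hΔbd z) (by positivity)
  have hPn0 : 0 ≤ Pn := le_trans (norm_nonneg _) (hPn (Classical.arbitrary _))
  set C₀ := Ml + MF * Pn with hC₀def
  set B := L * (∫ z, ‖Δc z‖ ∂μ₀) + (2 * L / ε) * P2 with hBdef
  -- pointwise bounds on the integrands
  have hcont1 : ∀ (Φ : C(↥Zs, ↥Zs)) (u : U) (v : V),
      Continuous (fun z : ↥Zs => l ((Φ z : Euc n)) u v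
        + (inner ℝ (F ((Φ z : Euc n)) u v) (p z) : ℝ)) := by
    intro Φ u v
    have hbase : Continuous fun z : ↥Zs => ((Φ z : Euc n), ((u, v) : U × V)) :=
      (continuous_subtype_val.comp Φ.continuous).prodMk continuous_const
    exact (hlc.comp hbase).add ((hFc.comp hbase).inner p.continuous)
  have hIbd : ∀ (Φ : C(↥Zs, ↥Zs)) (u : U) (v : V),
      |∫ z, (l ((Φ z : Euc n)) u v + (inner ℝ (F ((Φ z : Euc n)) u v) (p z) : ℝ)) ∂μ₀| ≤ C₀ := by
    intro Φ u v
    have hb : ∀ᵐ z ∂μ₀, ‖l ((Φ z : Euc n)) u v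
        + (inner ℝ (F ((Φ z : Euc n)) u v) (p z) : ℝ)‖ ≤ C₀ := by
      apply Filter.Eventually.of_forall
      intro z
      rw [Real.norm_eq_abs]
      have h1 := abs_le.mp (hMl ((Φ z : Euc n)) u v)
      have h2 : |(inner ℝ (F ((Φ z : Euc n)) u v) (p z) : ℝ)| ≤ MF * Pn := by
        refine le_trans (abs_real_inner_le_norm _ _) ?_
        exact mul_le_mul (hMF _ u v) (hPn z) (norm_nonneg _) hMF0
      have h3 := abs_le.mp h2
      rw [hC₀def, abs_le]
      constructor <;> linarith
    have hni := norm_integral_le_of_norm_le_const hb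
    rwa [probReal_univ, mul_one, Real.norm_eq_abs] at hni
  have hIdiff : ∀ (u : U) (v : V),
      (∫ z, (l ((Φh z : Euc n)) u v + (inner ℝ (F ((Φh z : Euc n)) u v) (p z) : ℝ)) ∂μ₀)
      ≤ (∫ z, (l ((Φh' z : Euc n)) u v + (inner ℝ (F ((Φh' z : Euc n)) u v) (p z) : ℝ)) ∂μ₀)
        + B := by
    intro u v
    have hi1 := cont_integrable μ₀ (hcont1 Φh u v)
    have hi2 := cont_integrable μ₀ (hcont1 Φh' u v)
    have hiB : Integrable (fun z => L * ‖Δc z‖ + (2 * L / ε) * ‖Δc z‖ ^ 2) μ₀ :=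
      (cont_integrable μ₀ (continuous_const.mul Δc.continuous.norm)).add
        (cont_integrable μ₀ (continuous_const.mul (Δc.continuous.norm.pow 2)))
    have hptwise : ∀ z : ↥Zs,
        (l ((Φh z : Euc n)) u v + (inner ℝ (F ((Φh z : Euc n)) u v) (p z) : ℝ))
        - (l ((Φh' z : Euc n)) u v + (inner ℝ (F ((Φh' z : Euc n)) u v) (p z) : ℝ))
        ≤ L * ‖Δc z‖ + (2 * L / ε) * ‖Δc z‖ ^ 2 := by
      intro z
      have h1 : l ((Φh z : Euc n)) u v - l ((Φh' z : Euc n)) u v ≤ L * ‖Δc z‖ := by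
        have := (abs_le.mp (hlL ((Φh z : Euc n)) ((Φh' z : Euc n)) u v)).2
        rwa [← hΔcapp] at this
      have h2 : (inner ℝ (F ((Φh z : Euc n)) u v) (p z) : ℝ)
          - (inner ℝ (F ((Φh' z : Euc n)) u v) (p z) : ℝ)
          ≤ (2 * L / ε) * ‖Δc z‖ ^ 2 := by
        rw [← inner_sub_left]
        refine le_trans (real_inner_le_norm _ _) ?_
        have h3 := hFL ((Φh z : Euc n)) ((Φh' z : Euc n)) u v
        rw [← hΔcapp] at h3
        rw [hpnorm]
        calc ‖F ((Φh z : Euc n)) u v - F ((Φh' z : Euc n)) u v‖ * ((2 / ε) * ‖Δc z‖)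
            ≤ (L * ‖Δc z‖) * ((2 / ε) * ‖Δc z‖) :=
              mul_le_mul_of_nonneg_right h3 (by positivity)
        _ = (2 * L / ε) * ‖Δc z‖ ^ 2 := by ring
      linarith
    have hmono : (∫ z, ((l ((Φh z : Euc n)) u v + (inner ℝ (F ((Φh z : Euc n)) u v) (p z) : ℝ))
          - (l ((Φh' z : Euc n)) u v + (inner ℝ (F ((Φh' z : Euc n)) u v) (p z) : ℝ))) ∂μ₀)
        ≤ ∫ z, (L * ‖Δc z‖ + (2 * L / ε) * ‖Δc z‖ ^ 2) ∂μ₀ :=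
      integral_mono (hi1.sub hi2) hiB hptwise
    have heq2 : (∫ z, ((l ((Φh z : Euc n)) u v + (inner ℝ (F ((Φh z : Euc n)) u v) (p z) : ℝ))
          - (l ((Φh' z : Euc n)) u v + (inner ℝ (F ((Φh' z : Euc n)) u v) (p z) : ℝ))) ∂μ₀)
        = (∫ z, (l ((Φh z : Euc n)) u v + (inner ℝ (F ((Φh z : Euc n)) u v) (p z) : ℝ)) ∂μ₀)
          - ∫ z, (l ((Φh' z : Euc n)) u v + (inner ℝ (F ((Φh' z : Euc n)) u v) (p z) : ℝ)) ∂μ₀ :=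
      integral_sub hi1 hi2
    have hBeq : ∫ z, (L * ‖Δc z‖ + (2 * L / ε) * ‖Δc z‖ ^ 2) ∂μ₀ = B := by
      rw [integral_add (f := fun z => L * ‖Δc z‖) (g := fun z => (2 * L / ε) * ‖Δc z‖ ^ 2)
        (cont_integrable μ₀ (continuous_const.mul Δc.continuous.norm))
        (cont_integrable μ₀ (continuous_const.mul (Δc.continuous.norm.pow 2))),
        MeasureTheory.integral_const_mul, MeasureTheory.integral_const_mul, hBdef, hP2Δ]
    rw [hBeq, heq2] at hmono
    linarith only [hmono]
  have hHamle : Ham μ₀ F l Φh p ≤ Ham μ₀ F l Φh' p + B := by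
    exact infsup_le _ _ C₀ B (fun u v => hIbd Φh u v) (fun u v => hIbd Φh' u v) hIdiff
  -- ∫ ‖Δc‖ ≤ D
  have hintD : ∫ z, ‖Δc z‖ ∂μ₀ ≤ D := by
    have h1 := sq_int μ₀ (cont_integrable μ₀ Δc.continuous.norm)
      (cont_integrable μ₀ (Δc.continuous.norm.pow 2))
    rw [← hP2Δ, ← hD2] at h1
    have h2 : 0 ≤ ∫ z, ‖Δc z‖ ∂μ₀ := integral_nonneg fun z => norm_nonneg _
    exact (pow_le_pow_iff_left₀ h2 hD0 two_ne_zero).mp h1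
  -- conclusion
  have hfin : lam * (W₁ Φh - W₂ Φh') ≤ B + (C₁ + C₂) * ε := by
    linarith only [hvs1, hvs2, hHamle]
  have hBbound : B ≤ L * ((k + 2) * ε) + 2 * L * (k * D + ε ^ 2) := by
    rw [hBdef]
    have h1 : L * (∫ z, ‖Δc z‖ ∂μ₀) ≤ L * ((k + 2) * ε) := by
      apply mul_le_mul_of_nonneg_left _ hL
      exact le_trans hintD hDle
    have h2 : (2 * L / ε) * P2 ≤ 2 * L * (k * D + ε ^ 2) := by
      have h3 : (2 * L / ε) * P2 = 2 * L * ((1 / ε) * P2) := by ring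
      rw [h3]
      apply mul_le_mul_of_nonneg_left hkey (by linarith)
    linarith
  -- final contradiction
  have hcontra : lam * M ≤ K * ε := by
    have hlamO1 : lam * (M - ε ^ 2) ≤ lam * (W₁ Φh - W₂ Φh') :=
      mul_le_mul_of_nonneg_left hO1 hlam.le
    have h2lk : (0:ℝ) ≤ 2 * L * k := by
      have := mul_nonneg hL hk.le
      linarith only [this]
    have hkD2 : (2 * L * k) * D ≤ (2 * L * k) * ((k + 2) * ε) :=
      mul_le_mul_of_nonneg_left hDle h2lk
    have h2le : (2 * L) * ε ^ 2 ≤ (2 * L) * ε :=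
      mul_le_mul_of_nonneg_left hεsq (by linarith only [hL])
    have hlamsq : lam * ε ^ 2 ≤ lam * ε := mul_le_mul_of_nonneg_left hεsq hlam.le
    rw [hKdef]
    linarith only [hlamO1, hfin, hBbound, hkD2, h2le, hlamsq]
  have hKε : K * ε ≤ lam * M / 2 := by
    have hKne : K ≠ 0 := ne_of_gt hK0
    calc K * ε ≤ K * (lam * M / (2 * K)) := mul_le_mul_of_nonneg_left hεa (le_of_lt hK0)
    _ = lam * M / 2 := by field_simp <;> ring
  have hlM : 0 < lam * M := mul_pos hlam hM0
  clear_value M K ε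
  linarith only [hcontra, hKε, hlM]
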